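/- Rotation-inversion consequence for the elliptic stability operator (explicit bound): Let ρ ∈ (-1,1), η ∈ (0,1], and let M = [[iv, conj(b)],[b, iv]] with v > 0 satisfy v² + |b|² = v/(η+v). Write M = |M|U with unitary U = M/√(v²+|b|²). Define on E₋^⊥ the operators T(R) = (v²+|b|²)·S(R) and 𝒰(R) = U* R U*. Then T is self-adjoint on E₋^⊥ with ‖T‖ = v²+|b|² ≤ 1, its top eigenvalue is nondegenerate with normalized eigenvector h = I/√2, with Gap(T) = (v²+|b|²)(1-|ρ|), and 1 - ‖T‖·⟨h, 𝒰 h⟩_{HS} = 2v² + η/(η+v). -/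

import Mathlib

open Matrix

/-- The self-energy operator of the elliptic ensemble. -/
noncomputable def selfEnergy (ρ : ℝ) (A : Matrix (Fin 2) (Fin 2) ℂ) : Matrix (Fin 2) (Fin 2) ℂ :=
  !![A 1 1, (ρ : ℂ) * A 1 0; (ρ : ℂ) * A 0 1, A 0 0]

/-- The Hilbert–Schmidt inner product on `2 × 2` matrices. -/
noncomputable def hsInner (A B : Matrix (Fin 2) (Fin 2) ℂ) : ℂ := (Aᴴ * B).trace

/-- The Hilbert–Schmidt norm on `2 × 2` matrices. -/
noncomputable def hsNorm (A : Matrix (Fin 2) (Fin 2) ℂ) : ℝ := Real.sqrt ((Aᴴ * A).trace.re)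


lemma stmt15_aux (η v : ℝ) (hη₁ : 0 < η) (hv : 0 < v) (b : ℂ) (M : Matrix (Fin 2) (Fin 2) ℂ)
    (hform : M = !![Complex.I * v, (starRingEnd ℂ) b; b, Complex.I * v])
    (hrel : v ^ 2 + ‖b‖ ^ 2 = v / (η + v)) :
    (1 : ℂ) - ((v ^ 2 + ‖b‖ ^ 2 : ℝ) : ℂ) *
      hsInner (((Real.sqrt 2 : ℂ))⁻¹ • (1 : Matrix (Fin 2) (Fin 2) ℂ))
        ((((Real.sqrt (v ^ 2 + ‖b‖ ^ 2) : ℂ))⁻¹ • M)ᴴ *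
          (((Real.sqrt 2 : ℂ))⁻¹ • (1 : Matrix (Fin 2) (Fin 2) ℂ)) *
          (((Real.sqrt (v ^ 2 + ‖b‖ ^ 2) : ℂ))⁻¹ • M)ᴴ) =
      ((2 * v ^ 2 + η / (η + v) : ℝ) : ℂ) := by
  have hk : 0 < v ^ 2 + ‖b‖ ^ 2 := by positivity
  have hsk : (Real.sqrt (v ^ 2 + ‖b‖ ^ 2) : ℂ) *
      (Real.sqrt (v ^ 2 + ‖b‖ ^ 2) : ℂ) = ((v ^ 2 + ‖b‖ ^ 2 : ℝ) : ℂ) := by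
    norm_cast; exact Real.mul_self_sqrt hk.le
  have hsk0 : (Real.sqrt (v ^ 2 + ‖b‖ ^ 2) : ℂ) ≠ 0 := by
    norm_cast; positivity
  have hs2 : (Real.sqrt 2 : ℂ) * (Real.sqrt 2 : ℂ) = 2 := by
    norm_cast; rw [Real.mul_self_sqrt] <;> norm_num
  have hs20 : (Real.sqrt 2 : ℂ) ≠ 0 := by norm_cast; positivity
  have hb : b * (starRingEnd ℂ) b = ((‖b‖ ^ 2 : ℝ) : ℂ) := by
    rw [Complex.mul_conj, Complex.sq_norm]
  simp only [hsInner, hform, Matrix.trace, Matrix.mul_apply, Fin.sum_univ_two,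
    Matrix.conjTranspose_apply, Matrix.diag, Matrix.smul_apply, Matrix.cons_val_zero,
    Matrix.cons_val_one, Matrix.head_cons, Matrix.head_fin_const, Matrix.cons_val_fin_one,
    Matrix.of_apply, smul_eq_mul, Matrix.one_apply, Complex.star_def, _root_.map_mul,
    Complex.conj_ofReal, Complex.conj_I, map_inv₀, Fin.isValue, zero_ne_one, one_ne_zero,
    if_true, if_false, Complex.ofReal_one, Complex.ofReal_zero, map_one, map_zero, Complex.conj_conj]
  field_simp
  ring_nf
  have hs2' : (Real.sqrt 2 : ℂ) ^ 2 = 2 := by rw [sq, hs2]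
  have hsk' : (Real.sqrt (v ^ 2 + ‖b‖ ^ 2) : ℂ) ^ 2 =
      ((v ^ 2 + ‖b‖ ^ 2 : ℝ) : ℂ) := by rw [sq]; exact hsk
  have hb' : (starRingEnd ℂ) b * b = ((‖b‖ ^ 2 : ℝ) : ℂ) := by rw [mul_comm]; exact hb
  simp only [hs2', hsk', Complex.I_sq, mul_assoc, hb, hb']
  norm_cast
  have hne : η + v ≠ 0 := by positivity
  have ha : ‖b‖ ^ 2 = v / (η + v) - v ^ 2 := by linarith
  rw [ha]
  field_simp
  rw [Int.cast_negSucc]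
  push_cast
  ring

theorem stmt15 (ρ η v : ℝ) (hρ₁ : -1 < ρ) (hρ₂ : ρ < 1) (hη₁ : 0 < η) (hη₂ : η ≤ 1)
    (hv : 0 < v) (b : ℂ) (M : Matrix (Fin 2) (Fin 2) ℂ)
    (hform : M = !![Complex.I * v, (starRingEnd ℂ) b; b, Complex.I * v])
    (hrel : v ^ 2 + ‖b‖ ^ 2 = v / (η + v)) :
    let k : ℝ := v ^ 2 + ‖b‖ ^ 2
    let U : Matrix (Fin 2) (Fin 2) ℂ := ((Real.sqrt k : ℂ))⁻¹ • M
    let T : Matrix (Fin 2) (Fin 2) ℂ → Matrix (Fin 2) (Fin 2) ℂ :=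
      fun R => (k : ℂ) • selfEnergy ρ R
    let h : Matrix (Fin 2) (Fin 2) ℂ := ((Real.sqrt 2 : ℂ))⁻¹ • (1 : Matrix (Fin 2) (Fin 2) ℂ)
    -- `T` leaves `E₋^⊥` invariant and is self-adjoint on it
    (∀ R : Matrix (Fin 2) (Fin 2) ℂ, R 0 0 = R 1 1 → (T R) 0 0 = (T R) 1 1) ∧
    (∀ R S : Matrix (Fin 2) (Fin 2) ℂ, R 0 0 = R 1 1 → S 0 0 = S 1 1 →
      hsInner (T R) S = hsInner R (T S)) ∧
    -- `‖T‖ = k ≤ 1`, attained at the normalized eigenvector `h`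
    (∀ R : Matrix (Fin 2) (Fin 2) ℂ, R 0 0 = R 1 1 → hsNorm (T R) ≤ k * hsNorm R) ∧
    k ≤ 1 ∧ hsNorm h = 1 ∧ T h = (k : ℂ) • h ∧
    -- nondegeneracy of the top eigenvalue
    (∀ R : Matrix (Fin 2) (Fin 2) ℂ, R 0 0 = R 1 1 → T R = (k : ℂ) • R →
      ∃ c : ℂ, R = c • (1 : Matrix (Fin 2) (Fin 2) ℂ)) ∧
    -- spectrum of `T` on `E₋^⊥` is `{k, ρk, -ρk}`, hence `Gap(T) = k(1-|ρ|)`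
    (∀ (c : ℂ) (R : Matrix (Fin 2) (Fin 2) ℂ), R 0 0 = R 1 1 → R ≠ 0 →
      T R = c • R → c = (k : ℂ) ∨ c = ((ρ * k : ℝ) : ℂ) ∨ c = -((ρ * k : ℝ) : ℂ)) ∧
    k - |ρ| * k = k * (1 - |ρ|) ∧
    -- the key scalar identity
    (1 : ℂ) - (k : ℂ) * hsInner h (Uᴴ * h * Uᴴ) = ((2 * v ^ 2 + η / (η + v) : ℝ) : ℂ) := by

  intro k U T h
  have hk : 0 < k := by positivity
  have hk1 : k ≤ 1 := by
    show v ^ 2 + ‖b‖ ^ 2 ≤ 1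
    rw [hrel]
    rw [div_le_one (by positivity)]
    linarith
  refine ⟨?_, ?_, ?_, hk1, ?_, ?_, ?_, ?_, ?_, ?_⟩
  · -- invariance
    intro R hR
    simp [T, selfEnergy, hR]
  · -- self-adjointness
    intro R S _ _
    simp only [T, hsInner, Matrix.trace, Matrix.mul_apply, Fin.sum_univ_two, selfEnergy,
      Matrix.conjTranspose_apply, Matrix.diag, Matrix.smul_apply, Matrix.cons_val_zero,
      Matrix.cons_val_one, Matrix.head_cons, Matrix.head_fin_const, Matrix.cons_val_fin_one,
      Matrix.of_apply, smul_eq_mul, Complex.star_def, _root_.map_mul, Complex.conj_ofReal]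
    ring
  · -- norm bound
    intro R _
    show hsNorm ((k : ℂ) • selfEnergy ρ R) ≤ k * hsNorm R
    unfold hsNorm
    have hmul : k * Real.sqrt ((Rᴴ * R).trace.re) =
        Real.sqrt (k ^ 2 * (Rᴴ * R).trace.re) := by
      rw [Real.sqrt_mul (sq_nonneg k), Real.sqrt_sq hk.le]
    rw [hmul]
    apply Real.sqrt_le_sqrt
    simp only [Matrix.trace, Matrix.mul_apply, Fin.sum_univ_two, selfEnergy,
      Matrix.conjTranspose_apply, Matrix.diag, Matrix.smul_apply, Matrix.cons_val_zero,
      Matrix.cons_val_one, Matrix.head_cons, Matrix.head_fin_const, Matrix.cons_val_fin_one,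
      Matrix.of_apply, smul_eq_mul, Complex.star_def, _root_.map_mul, Complex.conj_ofReal]
    simp only [Complex.add_re, Complex.mul_re, Complex.mul_im, Complex.conj_re, Complex.conj_im,
      Complex.ofReal_re, Complex.ofReal_im]
    nlinarith [sq_nonneg ((R 0 1).re), sq_nonneg ((R 0 1).im), sq_nonneg ((R 1 0).re),
      sq_nonneg ((R 1 0).im), sq_nonneg (1 - ρ), sq_nonneg (1 + ρ),
      mul_nonneg (sq_nonneg k) (mul_nonneg (mul_nonneg (sub_nonneg.2 hρ₂.le)
        (neg_le_iff_add_nonneg.1 hρ₁.le)) (sq_nonneg (R 0 1).re)),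
      mul_nonneg (sq_nonneg k) (mul_nonneg (mul_nonneg (sub_nonneg.2 hρ₂.le)
        (neg_le_iff_add_nonneg.1 hρ₁.le)) (sq_nonneg (R 0 1).im)),
      mul_nonneg (sq_nonneg k) (mul_nonneg (mul_nonneg (sub_nonneg.2 hρ₂.le)
        (neg_le_iff_add_nonneg.1 hρ₁.le)) (sq_nonneg (R 1 0).re)),
      mul_nonneg (sq_nonneg k) (mul_nonneg (mul_nonneg (sub_nonneg.2 hρ₂.le)
        (neg_le_iff_add_nonneg.1 hρ₁.le)) (sq_nonneg (R 1 0).im))]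
  · -- hsNorm h = 1
    have hs2 : (Real.sqrt 2 : ℂ) * (Real.sqrt 2 : ℂ) = 2 := by
      norm_cast; rw [Real.mul_self_sqrt]; norm_num
    show Real.sqrt _ = 1
    have : ((h : Matrix (Fin 2) (Fin 2) ℂ)ᴴ * h).trace.re = 1 := by
      simp only [h, Matrix.trace, Matrix.mul_apply, Fin.sum_univ_two,
        Matrix.conjTranspose_apply, Matrix.diag, Matrix.smul_apply, Matrix.one_apply,
        smul_eq_mul, Complex.star_def, _root_.map_mul, map_inv₀, Complex.conj_ofReal]
      norm_num
      nlinarith [Real.mul_self_sqrt (show (0:ℝ) ≤ 2 by norm_num)]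
    rw [this, Real.sqrt_one]
  · -- T h = k • h
    ext i j
    fin_cases i <;> fin_cases j <;>
      simp [T, h, selfEnergy, Matrix.one_apply]
  · -- nondegeneracy
    intro R hR hTR
    have hkc : (k : ℂ) ≠ 0 := by
      norm_cast; exact hk.ne'
    have h01 := congrFun (congrFun hTR 0) 1
    have h10 := congrFun (congrFun hTR 1) 0
    simp only [T, selfEnergy, Matrix.smul_apply, Matrix.cons_val_zero, Matrix.cons_val_one,
      Matrix.head_cons, Matrix.head_fin_const, Matrix.cons_val_fin_one, Matrix.of_apply,
      smul_eq_mul] at h01 h10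
    have e01 : (ρ : ℂ) * R 1 0 = R 0 1 := mul_left_cancel₀ hkc h01
    have e10 : (ρ : ℂ) * R 0 1 = R 1 0 := mul_left_cancel₀ hkc h10
    have hρ2 : ((ρ : ℂ) * (ρ : ℂ) - 1) ≠ 0 := by
      rw [sub_ne_zero]
      norm_cast
      nlinarith
    have hz01 : R 0 1 = 0 := by
      have : ((ρ : ℂ) * (ρ : ℂ) - 1) * R 0 1 = 0 := by
        rw [sub_mul, one_mul, mul_assoc, e10, e01, sub_self]
      exact (mul_eq_zero.1 this).resolve_left hρ2
    have hz10 : R 1 0 = 0 := by rw [← e10, hz01, mul_zero]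
    refine ⟨R 0 0, ?_⟩
    ext i j
    fin_cases i <;> fin_cases j <;>
      simp [Matrix.one_apply, hz01, hz10, ← hR]
  · -- spectrum
    intro c R hR hR0 hTR
    have hkc : (k : ℂ) ≠ 0 := by
      norm_cast; exact hk.ne'
    have h00 := congrFun (congrFun hTR 0) 0
    have h01 := congrFun (congrFun hTR 0) 1
    have h10 := congrFun (congrFun hTR 1) 0
    simp only [T, selfEnergy, Matrix.smul_apply, Matrix.cons_val_zero, Matrix.cons_val_one,
      Matrix.head_cons, Matrix.head_fin_const, Matrix.cons_val_fin_one, Matrix.of_apply,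
      smul_eq_mul] at h00 h01 h10
    rw [← hR] at h00
    by_cases hd : R 0 0 = 0
    · -- diagonal is zero, some off-diagonal entry is nonzero
      have hoff : R 0 1 ≠ 0 ∨ R 1 0 ≠ 0 := by
        by_contra hcon
        push_neg at hcon
        apply hR0
        ext i j
        fin_cases i <;> fin_cases j <;>
          simp [hcon.1, hcon.2, hd, ← hR]
      have hsq : ∀ x : Matrix (Fin 2) (Fin 2) ℂ → Prop, True := fun _ => trivial
      have key : (c * c - ((ρ : ℝ) * k : ℝ) * ((ρ : ℝ) * k : ℝ)) = 0 := by
        rcases hoff with ho | ho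
        · have : (c * c - ((ρ : ℝ) * k : ℝ) * ((ρ : ℝ) * k : ℝ)) * R 0 1 = 0 := by
            push_cast
            linear_combination -(c * h01) - (k : ℂ) * (ρ : ℂ) * h10
          exact (mul_eq_zero.1 this).resolve_right ho
        · have : (c * c - ((ρ : ℝ) * k : ℝ) * ((ρ : ℝ) * k : ℝ)) * R 1 0 = 0 := by
            push_cast
            linear_combination -(c * h10) - (k : ℂ) * (ρ : ℂ) * h01
          exact (mul_eq_zero.1 this).resolve_right ho
      have : (c - ((ρ : ℝ) * k : ℝ)) * (c + ((ρ : ℝ) * k : ℝ)) = 0 := by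
        linear_combination key
      rcases mul_eq_zero.1 this with hcc | hcc
      · exact Or.inr (Or.inl (by linear_combination hcc))
      · exact Or.inr (Or.inr (by linear_combination hcc))
    · left
      have : ((k : ℂ) - c) * R 0 0 = 0 := by linear_combination h00
      have := (mul_eq_zero.1 this).resolve_right hd
      linear_combination -this
  · ring
  · exact stmt15_aux η v hη₁ hv b M hform hrel
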